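/- Let v ∈ ℝ^n with v_i ≥ 0 for all i, and let Γ be a natural number with Γ ≤ n. Then inf { Γ·θ + Σ_{i=1}^n γ_i : θ ∈ ℝ, γ ∈ ℝ^n, θ ≥ 0, γ_i ≥ 0 for all i, θ + γ_i ≥ v_i for all i } = ‖v‖^(Γ), and the infimum is attained. -/

import Mathlib

/-- `‖v‖^(Γ)`: the maximum over subsets `S` of cardinality `Γ` of `Σ_{i∈S} v i`. -/
noncomputable def gammaNorm (n : ℕ) (Γ : ℕ) (v : Fin n → ℝ) : ℝ :=
  sSup {s : ℝ | ∃ S : Finset (Fin n), S.card = Γ ∧ s = ∑ i ∈ S, v i}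

/-- the LP `min{Γθ + Σ γ_i : θ ≥ 0, γ ≥ 0, θ + γ_i ≥ v_i}` has optimal
value `‖v‖^(Γ)`, and the infimum is attained. -/
theorem stmt3 (n : ℕ) (hn : 1 ≤ n) (v : Fin n → ℝ) (hv : ∀ i, 0 ≤ v i)
    (Γ : ℕ) (hΓ : Γ ≤ n) :
    sInf {w : ℝ | ∃ (θ : ℝ) (γ : Fin n → ℝ), 0 ≤ θ ∧ (∀ i, 0 ≤ γ i) ∧
        (∀ i, θ + γ i ≥ v i) ∧ w = (Γ : ℝ) * θ + ∑ i, γ i} = gammaNorm n Γ v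
    ∧ gammaNorm n Γ v ∈ {w : ℝ | ∃ (θ : ℝ) (γ : Fin n → ℝ), 0 ≤ θ ∧ (∀ i, 0 ≤ γ i) ∧
        (∀ i, θ + γ i ≥ v i) ∧ w = (Γ : ℝ) * θ + ∑ i, γ i} := by
  -- a maximizing subset S₀
  obtain ⟨S₀, hS₀mem, hS₀max'⟩ := Finset.exists_max_image
    (Finset.powersetCard Γ (Finset.univ : Finset (Fin n))) (fun S => ∑ i ∈ S, v i)
    ((Finset.powersetCard_nonempty).mpr (by simpa using hΓ))
  have hS₀card : S₀.card = Γ := (Finset.mem_powersetCard.mp hS₀mem).2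
  have hS₀max : ∀ S : Finset (Fin n), S.card = Γ → ∑ i ∈ S, v i ≤ ∑ i ∈ S₀, v i := by
    intro S hS
    exact hS₀max' S (Finset.mem_powersetCard.mpr ⟨S.subset_univ, hS⟩)
  have hgn : gammaNorm n Γ v = ∑ i ∈ S₀, v i := by
    unfold gammaNorm
    apply le_antisymm
    · refine csSup_le ⟨∑ i ∈ S₀, v i, S₀, hS₀card, rfl⟩ ?_
      rintro s ⟨S, hS, rfl⟩
      exact hS₀max S hS
    · refine le_csSup ⟨∑ i ∈ S₀, v i, ?_⟩ ⟨S₀, hS₀card, rfl⟩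
      rintro s ⟨S, hS, rfl⟩
      exact hS₀max S hS
  -- weak duality: gammaNorm is a lower bound on the feasible values
  have hlb : ∀ w ∈ {w : ℝ | ∃ (θ : ℝ) (γ : Fin n → ℝ), 0 ≤ θ ∧ (∀ i, 0 ≤ γ i) ∧
      (∀ i, θ + γ i ≥ v i) ∧ w = (Γ : ℝ) * θ + ∑ i, γ i}, gammaNorm n Γ v ≤ w := by
    rintro w ⟨θ, γ, hθ, hγ, hfeas, rfl⟩
    rw [hgn]
    calc ∑ i ∈ S₀, v i ≤ ∑ i ∈ S₀, (θ + γ i) := Finset.sum_le_sum (fun i _ => hfeas i)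
      _ = (Γ : ℝ) * θ + ∑ i ∈ S₀, γ i := by
          rw [Finset.sum_add_distrib, Finset.sum_const, hS₀card, nsmul_eq_mul]
      _ ≤ (Γ : ℝ) * θ + ∑ i, γ i := by
          have := Finset.sum_le_sum_of_subset_of_nonneg S₀.subset_univ
            (fun i _ _ => hγ i)
          linarith
  -- attainment
  have hmem : gammaNorm n Γ v ∈ {w : ℝ | ∃ (θ : ℝ) (γ : Fin n → ℝ), 0 ≤ θ ∧
      (∀ i, 0 ≤ γ i) ∧ (∀ i, θ + γ i ≥ v i) ∧ w = (Γ : ℝ) * θ + ∑ i, γ i} := by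
    rcases Nat.eq_zero_or_pos Γ with hΓ0 | hΓpos
    · -- Γ = 0 : take θ = max v, γ = 0
      subst hΓ0
      have hS₀e : S₀ = ∅ := Finset.card_eq_zero.mp hS₀card
      have huniv : (Finset.univ : Finset (Fin n)).Nonempty := by
        exact ⟨⟨0, hn⟩, Finset.mem_univ _⟩
      refine ⟨Finset.univ.sup' huniv v, 0, ?_, fun i => le_refl 0, ?_, ?_⟩
      · exact le_trans (hv ⟨0, hn⟩) (Finset.le_sup' v (Finset.mem_univ _))
      · intro i
        simp only [Pi.zero_apply, add_zero, ge_iff_le]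
        exact Finset.le_sup' v (Finset.mem_univ i)
      · simp [hgn, hS₀e]
    · -- Γ ≥ 1 : take θ = min over S₀ of v, γ = (v - θ)⁺
      have hS₀ne : S₀.Nonempty := Finset.card_pos.mp (hS₀card ▸ hΓpos)
      obtain ⟨j, hj, hjmin⟩ := Finset.exists_min_image S₀ v hS₀ne
      have hout : ∀ i ∉ S₀, v i ≤ v j := by
        intro i hi
        have hinot : i ∉ S₀.erase j := fun h => hi (Finset.mem_of_mem_erase h)
        have hcard : (insert i (S₀.erase j)).card = Γ := by
          rw [Finset.card_insert_of_notMem hinot, Finset.card_erase_of_mem hj, hS₀card]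
          omega
        have h1 := hS₀max _ hcard
        rw [Finset.sum_insert hinot] at h1
        have h2 : ∑ k ∈ S₀.erase j, v k + v j = ∑ k ∈ S₀, v k :=
          Finset.sum_erase_add S₀ v hj
        linarith
      refine ⟨v j, fun i => max (v i - v j) 0, hv j, fun i => le_max_right _ _, ?_, ?_⟩
      · intro i
        have := le_max_left (v i - v j) 0
        simp only [ge_iff_le]
        linarith
      · have hsum : ∑ i, max (v i - v j) 0 = ∑ i ∈ S₀, (v i - v j) := by
          rw [← Finset.sum_subset S₀.subset_univ
            (fun i _ hi => max_eq_right (by linarith [hout i hi]))]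
          exact Finset.sum_congr rfl (fun i hi => max_eq_left (by linarith [hjmin i hi]))
        rw [hgn, hsum, Finset.sum_sub_distrib, Finset.sum_const, hS₀card, nsmul_eq_mul]
        ring
  refine ⟨le_antisymm (csInf_le ⟨gammaNorm n Γ v, hlb⟩ hmem) (le_csInf ⟨_, hmem⟩ hlb), hmem⟩
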